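/- Let m, n be natural numbers, let a : Fin m → Fin n → LaurentSeries ℂ, b : Fin m → LaurentSeries ℂ, and let R : Fin n → ℤ satisfy Trop(a i j) ≥ −(R j) for all i, j. Then the following are equivalent: (1) there exist x_j ∈ LaurentSeries ℂ (j ∈ Fin n) with Trop(x_j) = 0 for all j and Trop(b_i − Σ_j a_{i,j} * x_j) = 0 for all i; (2) there exist such x_j which in addition are polynomial truncations, i.e., the support of each x_j is contained in the integer interval [0, max(R j, 0)] (so each x_j is a polynomial in t of degree at most max(R j, 0) with nonzero constant term). -/

import Mathlib

open HahnSeries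

private lemma aux_le_orderTop {x : LaurentSeries ℂ} {c : ℤ}
    (h : ∀ k : ℤ, k < c → x.coeff k = 0) : (c : WithTop ℤ) ≤ x.orderTop := by
  by_cases hx : x = 0
  · simp [hx]
  · rw [HahnSeries.orderTop_of_ne_zero hx, WithTop.coe_le_coe]
    by_contra hlt
    push_neg at hlt
    exact x.isWF_support.min_mem (HahnSeries.support_nonempty_iff.2 hx) (h _ hlt)

private lemma aux_orderTop_eq_zero {x : LaurentSeries ℂ}
    (h0 : x.coeff 0 ≠ 0) (hneg : ∀ k : ℤ, k < 0 → x.coeff k = 0) :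
    x.orderTop = (0 : WithTop ℤ) := by
  refine HahnSeries.orderTop_eq_of_le h0 ?_
  intro g hg
  by_contra hlt
  push_neg at hlt
  exact hg (hneg g hlt)

private lemma aux_le_orderTop_sum {ι : Type*} (s : Finset ι)
    (f : ι → LaurentSeries ℂ) (c : WithTop ℤ) (h : ∀ j ∈ s, c ≤ (f j).orderTop) :
    c ≤ (∑ j ∈ s, f j).orderTop := by
  classical
  induction s using Finset.induction with
  | empty => simp
  | insert _ _ hj ih =>
    rename_i a s'
    rw [Finset.sum_insert hj]
    refine le_trans ?_ HahnSeries.min_orderTop_le_orderTop_add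
    exact le_min (h a (Finset.mem_insert_self a s'))
      (ih fun j hjj => h j (Finset.mem_insert_of_mem hjj))

theorem laurent_solution_iff_truncated_solution (m n : ℕ)
    (a : Fin m → Fin n → LaurentSeries ℂ) (b : Fin m → LaurentSeries ℂ)
    (R : Fin n → ℤ) (ha : ∀ i j, ((-(R j) : ℤ) : WithTop ℤ) ≤ (a i j).orderTop) :
    (∃ x : Fin n → LaurentSeries ℂ,
        (∀ j, (x j).orderTop = (0 : WithTop ℤ)) ∧
        (∀ i, (b i - ∑ j, a i j * x j).orderTop = (0 : WithTop ℤ))) ↔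
    (∃ x : Fin n → LaurentSeries ℂ,
        (∀ j, (x j).orderTop = (0 : WithTop ℤ)) ∧
        (∀ i, (b i - ∑ j, a i j * x j).orderTop = (0 : WithTop ℤ)) ∧
        (∀ j, (x j).support ⊆ Set.Icc (0 : ℤ) (max (R j) 0))) := by
  constructor
  · rintro ⟨x, hx0, hxb⟩
    classical
    -- truncation
    set x' : Fin n → LaurentSeries ℂ :=
      fun j => ∑ k ∈ Finset.Icc (0 : ℤ) (max (R j) 0), HahnSeries.single k ((x j).coeff k)
      with hx'def
    have hcoeff : ∀ j (l : ℤ), (x' j).coeff l =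
        if l ∈ Finset.Icc (0 : ℤ) (max (R j) 0) then (x j).coeff l else 0 := by
      intro j l
      rw [hx'def]
      simp only
      rw [show (∑ k ∈ Finset.Icc (0 : ℤ) (max (R j) 0),
          HahnSeries.single k ((x j).coeff k)).coeff l =
          ∑ k ∈ Finset.Icc (0 : ℤ) (max (R j) 0),
            (HahnSeries.single k ((x j).coeff k)).coeff l from
        map_sum (HahnSeries.coeff.addMonoidHom l) _ _]
      by_cases hl : l ∈ Finset.Icc (0 : ℤ) (max (R j) 0)
      · rw [if_pos hl, Finset.sum_eq_single l]
        · simp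
        · intro k _ hk; exact HahnSeries.coeff_single_of_ne (Ne.symm hk)
        · intro h; exact absurd hl h
      · rw [if_neg hl]
        refine Finset.sum_eq_zero fun k hk => ?_
        exact HahnSeries.coeff_single_of_ne (fun h => hl (h ▸ hk))
    have hxneg : ∀ j (k : ℤ), k < 0 → (x j).coeff k = 0 := by
      intro j k hk
      exact HahnSeries.coeff_eq_zero_of_lt_orderTop (by rw [hx0 j]; exact_mod_cast hk)
    have hx'0 : ∀ j, (x' j).orderTop = (0 : WithTop ℤ) := by
      intro j
      refine aux_orderTop_eq_zero ?_ ?_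
      · rw [hcoeff j 0, if_pos (by simp)]
        exact HahnSeries.coeff_orderTop_ne (hx0 j)
      · intro k hk
        rw [hcoeff j k, if_neg (by simp [Finset.mem_Icc]; omega)]
    have hsupp : ∀ j, (x' j).support ⊆ Set.Icc (0 : ℤ) (max (R j) 0) := by
      intro j l hl
      rw [HahnSeries.mem_support, hcoeff j l] at hl
      by_contra hmem
      rw [if_neg (by simpa [Finset.mem_Icc, Set.mem_Icc] using hmem)] at hl
      exact hl rfl
    -- the differences have large orderTop
    have hdiff : ∀ j, ((max (R j) 0 + 1 : ℤ) : WithTop ℤ) ≤ (x j - x' j).orderTop := by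
      intro j
      refine aux_le_orderTop ?_
      intro k hk
      rw [HahnSeries.coeff_sub, hcoeff j k]
      by_cases hmem : k ∈ Finset.Icc (0 : ℤ) (max (R j) 0)
      · rw [if_pos hmem]; ring
      · rw [if_neg hmem]
        rw [Finset.mem_Icc] at hmem
        have : k < 0 := by omega
        rw [hxneg j k this, sub_zero]
    have hmul : ∀ i j, ((1 : ℤ) : WithTop ℤ) ≤ (a i j * (x j - x' j)).orderTop := by
      intro i j
      refine le_trans ?_ HahnSeries.orderTop_add_le_mul
      calc ((1 : ℤ) : WithTop ℤ)
          ≤ ((-(R j) : ℤ) : WithTop ℤ) + ((max (R j) 0 + 1 : ℤ) : WithTop ℤ) := by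
            rw [← WithTop.coe_add, WithTop.coe_le_coe]; omega
        _ ≤ (a i j).orderTop + (x j - x' j).orderTop :=
            add_le_add (ha i j) (hdiff j)
    refine ⟨x', hx'0, ?_, hsupp⟩
    intro i
    have key : b i - ∑ j, a i j * x' j =
        (b i - ∑ j, a i j * x j) + ∑ j, a i j * (x j - x' j) := by
      simp only [mul_sub]
      rw [Finset.sum_sub_distrib]
      ring
    rw [key]
    have h2 : ((1 : ℤ) : WithTop ℤ) ≤ (∑ j, a i j * (x j - x' j)).orderTop :=
      aux_le_orderTop_sum _ _ _ (fun j _ => hmul i j)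
    rw [HahnSeries.orderTop_add_eq_left, hxb i]
    rw [hxb i]
    exact lt_of_lt_of_le (by exact_mod_cast zero_lt_one) h2
  · rintro ⟨x, hx0, hxb, _⟩
    exact ⟨x, hx0, hxb⟩
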